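/- Under the assumptions of Theorem 1 (D, R convex, S_D(d,v) ≤ (1/(2τ))‖d−v‖²), the per-iteration quantities of the linearized ADMM satisfy the single-step descent inequality: (λ/2)(‖g_e^{k+1}‖² + ‖b_e^{k+1}‖²) + (1/2)‖d_e^{k+1}‖² + τ(D(d^{k+1}) − D(d̂) − ⟨∇D(d̂), d^{k+1} − d̂⟩) ≤ (λ/2)(‖g_e^k‖² + ‖b_e^k‖²) + (1/2)‖d_e^k‖² + τ(D(d^k) − D(d̂) − ⟨∇D(d̂), d^k − d̂⟩) − (λ/2)‖K d_e^{k+1} − g_e^k‖² − τ S_D(d^k, d̂) − ατ S_R(g^{k+1}, ĝ). -/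

import Mathlib

open scoped RealInnerProductSpace

/-- The convex subdifferential of `f` at `x`. -/
def subdiff {F : Type*} [NormedAddCommGroup F] [InnerProductSpace ℝ F]
    (f : F → ℝ) (x : F) : Set F :=
  {p | ∀ y, f x + ⟪p, y - x⟫ ≤ f y}

/-- First-order convexity inequality from the gradient. -/
lemma convex_grad_ineq {F : Type*} [NormedAddCommGroup F] [InnerProductSpace ℝ F]
    [CompleteSpace F]
    (f : F → ℝ) (hf : ConvexOn ℝ Set.univ f) {x g : F} (hg : HasGradientAt f g x) (y : F) :
    f x + ⟪g, y - x⟫ ≤ f y := by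
  set v := y - x with hv
  have h1 : HasDerivAt (fun t : ℝ => x + t • v) v 0 := by
    simpa using ((hasDerivAt_id (0:ℝ)).smul_const v).const_add x
  have hg' : HasFDerivAt f (InnerProductSpace.toDual ℝ F g) (x + (0:ℝ) • v) := by
    simpa using hg.hasFDerivAt
  have hline : HasDerivAt (fun t : ℝ => f (x + t • v)) ⟪g, v⟫ 0 := by
    have hc := hg'.comp_hasDerivAt 0 h1
    simp at hc
    exact hc
  have hsl : Filter.Tendsto (slope (fun t : ℝ => f (x + t • v)) 0) (nhdsWithin 0 (Set.Ioi 0))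
      (nhds ⟪g, v⟫) :=
    (hasDerivAt_iff_tendsto_slope.1 hline).mono_left
      (nhdsWithin_mono 0 (fun t ht => ht.ne'))
  have hb : ∀ᶠ t in nhdsWithin (0:ℝ) (Set.Ioi 0),
      slope (fun t : ℝ => f (x + t • v)) 0 t ≤ f y - f x := by
    filter_upwards [Ioc_mem_nhdsGT_of_mem (Set.left_mem_Ico.2 one_pos)] with t ht
    have h0t : 0 < t := ht.1
    have hcv := hf.2 (Set.mem_univ x) (Set.mem_univ y)
      (show (0:ℝ) ≤ 1 - t by linarith [ht.2]) h0t.le (show (1-t)+t = 1 by ring)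
    have hxy : x + t • v = (1 - t) • x + t • y := by
      simp [hv, smul_sub, sub_smul]; abel
    have hx0 : x + (0:ℝ) • v = x := by simp
    rw [slope_def_field, hxy, hx0, sub_zero, div_le_iff₀ h0t]
    simp only [smul_eq_mul] at hcv
    nlinarith [hcv]
  have := le_of_tendsto hsl hb
  linarith

lemma T_identity {F : Type*} [NormedAddCommGroup F] [InnerProductSpace ℝ F]
    (e0 e1 f0 f1 w : F) (h : f1 = f0 + w - e1) :
    1/2*(‖e1‖^2 - ‖e0‖^2 + ‖f1‖^2 - ‖f0‖^2) - ⟪w - e0 + f0, w⟫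
      + 1/2*‖w - e0‖^2 + ⟪e1, f1⟫ = 0 := by
  subst h
  simp only [← real_inner_self_eq_norm_sq, inner_sub_left, inner_sub_right,
    inner_add_left, inner_add_right]
  linarith [real_inner_comm e0 w, real_inner_comm e1 w, real_inner_comm f0 w,
    real_inner_comm e1 f0, real_inner_comm e0 f0, real_inner_comm e0 e1]

lemma inner_half_identity {F : Type*} [NormedAddCommGroup F] [InnerProductSpace ℝ F]
    (a b : F) : ⟪a - b, a⟫ = 1/2*(‖a‖^2 - ‖b‖^2 + ‖a - b‖^2) := by
  simp only [← real_inner_self_eq_norm_sq, inner_sub_left, inner_sub_right]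
  linarith [real_inner_comm a b]

/-- Single-step descent (Lyapunov) inequality for the linearized ADMM under the
assumptions of Theorem 1. -/
theorem stmt_10 {n m : ℕ} (D : EuclideanSpace ℝ (Fin n) → ℝ)
    (gradD : EuclideanSpace ℝ (Fin n) → EuclideanSpace ℝ (Fin n))
    (hconvD : ConvexOn ℝ Set.univ D)
    (hgrad : ∀ x, HasGradientAt D (gradD x) x)
    (R : EuclideanSpace ℝ (Fin m) → ℝ) (hconvR : ConvexOn ℝ Set.univ R)
    (K : EuclideanSpace ℝ (Fin n) →ₗ[ℝ] EuclideanSpace ℝ (Fin m))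
    (α lam τ : ℝ) (hα : 0 < α) (hlam : 0 < lam) (hτ : 0 < τ)
    (hSD : ∀ d v, ⟪d - v, gradD d - gradD v⟫ ≤ (1 / (2 * τ)) * ‖d - v‖^2)
    -- one step of the linearized ADMM: iterates and optimality conditions
    (d0 d1 : EuclideanSpace ℝ (Fin n)) (g0 g1 b0 b1 q1 : EuclideanSpace ℝ (Fin m))
    (hopt1 : (0 : EuclideanSpace ℝ (Fin n)) =
        lam • K.adjoint (K d1 - g0 + b0) + (d1 - d0) + τ • gradD d0)
    (hq1 : q1 ∈ subdiff R g1)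
    (hopt2 : lam • (K d1 - g1 + b0) = (α * τ) • q1)
    (hbup : b1 = b0 + (K d1 - g1))
    -- saddle point (d̂, ĝ, b̂) with K d̂ = ĝ, b̂ = (ατ/λ) q̂, q̂ ∈ ∂R(ĝ),
    -- and stationarity τ∇D(d̂) + λ Kᵀ b̂ = 0
    (dh : EuclideanSpace ℝ (Fin n)) (gh bh qh : EuclideanSpace ℝ (Fin m))
    (hgh : gh = K dh) (hqh : qh ∈ subdiff R gh) (hbh : bh = (α * τ / lam) • qh)
    (hstat : τ • gradD dh + lam • K.adjoint bh = 0) :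
    lam / 2 * (‖g1 - gh‖^2 + ‖b1 - bh‖^2) + 1 / 2 * ‖d1 - dh‖^2
        + τ * (D d1 - D dh - ⟪gradD dh, d1 - dh⟫) ≤
      lam / 2 * (‖g0 - gh‖^2 + ‖b0 - bh‖^2) + 1 / 2 * ‖d0 - dh‖^2
        + τ * (D d0 - D dh - ⟪gradD dh, d0 - dh⟫)
        - lam / 2 * ‖K (d1 - dh) - (g0 - gh)‖^2
        - τ * ⟪d0 - dh, gradD d0 - gradD dh⟫
        - α * τ * ⟪g1 - gh, q1 - qh⟫ := by
  have hK : K (d1 - dh) = K d1 - gh := by rw [map_sub, hgh]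
  rw [hK]
  -- F1 : descent bound from convexity + hSD
  have hc := convex_grad_ineq D hconvD (hgrad d1) d0
  have hs := hSD d1 d0
  have h2τ : (0:ℝ) < 2*τ := by linarith
  have hs' : ⟪d1 - d0, gradD d1 - gradD d0⟫ * (2*τ) ≤ ‖d1 - d0‖^2 := by
    have h := mul_le_mul_of_nonneg_right hs h2τ.le
    have hr : (1/(2*τ))*‖d1 - d0‖^2*(2*τ) = ‖d1 - d0‖^2 := by field_simp
    linarith
  have I3 : ⟪d1 - d0, gradD d1 - gradD d0⟫
      = ⟪gradD d1, d1 - d0⟫ - ⟪gradD d0, d1 - d0⟫ := by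
    rw [inner_sub_right, real_inner_comm (d1 - d0) (gradD d1),
      real_inner_comm (d1 - d0) (gradD d0)]
  have hflip : ⟪gradD d1, d0 - d1⟫ = -⟪gradD d1, d1 - d0⟫ := by
    rw [show d0 - d1 = -(d1 - d0) by abel, inner_neg_right]
  have hkey : D d1 - D d0 ≤ ⟪gradD d0, d1 - d0⟫ + ⟪d1 - d0, gradD d1 - gradD d0⟫ := by
    linarith [hc, hflip, I3]
  have F1 : τ*(D d1) - τ*(D d0) ≤ τ*⟪gradD d0, d1 - d0⟫ + 1/2*‖d1 - d0‖^2 := by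
    have h := mul_le_mul_of_nonneg_left hkey hτ.le
    nlinarith [hs']
  -- e1 : optimality condition paired with d1 - dh
  have e1 := congrArg (fun z => ⟪z, d1 - dh⟫) hopt1
  simp only [inner_zero_left, inner_add_left, real_inner_smul_left,
    LinearMap.adjoint_inner_left, hK] at e1
  -- e2 : stationarity paired with d1 - dh
  have e2 := congrArg (fun z => ⟪z, d1 - dh⟫) hstat
  simp only [inner_zero_left, inner_add_left, real_inner_smul_left,
    LinearMap.adjoint_inner_left, hK] at e2
  -- F3 : multiplier relation
  have hb1 : lam • b1 = (α*τ) • q1 := by rw [hbup, ← hopt2]; congr 1; abel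
  have hbh' : lam • bh = (α*τ) • qh := by
    rw [hbh, smul_smul]; congr 1; field_simp
  have hvq : lam • (b1 - bh) = (α*τ) • (q1 - qh) := by
    rw [smul_sub, hb1, hbh', smul_sub]
  have F3 : lam * ⟪g1 - gh, b1 - bh⟫ = α*τ*⟪g1 - gh, q1 - qh⟫ := by
    have h := congrArg (fun z => ⟪g1 - gh, z⟫) hvq
    simp only [real_inner_smul_right] at h
    linarith
  -- F4
  have F4 : ⟪d1 - d0, d1 - dh⟫
      = 1/2*(‖d1 - dh‖^2 - ‖d0 - dh‖^2 + ‖d1 - d0‖^2) := by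
    have h := inner_half_identity (d1 - dh) (d0 - dh)
    rw [show (d1 - dh) - (d0 - dh) = d1 - d0 by abel] at h
    exact h
  -- F5, multiplied by lam
  have F5 := T_identity (g0 - gh) (g1 - gh) (b0 - bh) (b1 - bh) (K d1 - gh)
    (by rw [hbup]; abel)
  have F5l : lam * (1/2*(‖g1 - gh‖^2 - ‖g0 - gh‖^2 + ‖b1 - bh‖^2 - ‖b0 - bh‖^2)
      - ⟪(K d1 - gh) - (g0 - gh) + (b0 - bh), K d1 - gh⟫
      + 1/2*‖(K d1 - gh) - (g0 - gh)‖^2 + ⟪g1 - gh, b1 - bh⟫) = 0 := by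
    rw [F5, mul_zero]
  -- I4, multiplied by lam
  have I4 : ⟪(K d1 - gh) - (g0 - gh) + (b0 - bh), K d1 - gh⟫
      = ⟪K d1 - g0 + b0, K d1 - gh⟫ - ⟪bh, K d1 - gh⟫ := by
    rw [← inner_sub_left]; congr 1; abel
  have I4l : lam * ⟪(K d1 - gh) - (g0 - gh) + (b0 - bh), K d1 - gh⟫
      = lam * ⟪K d1 - g0 + b0, K d1 - gh⟫ - lam * ⟪bh, K d1 - gh⟫ := by
    rw [I4]; ring
  -- I1, I2, multiplied by τ
  have I1 : ⟪gradD d0, d1 - dh⟫ = ⟪gradD d0, d1 - d0⟫ + ⟪gradD d0, d0 - dh⟫ := by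
    rw [← inner_add_right]; congr 1; abel
  have I1t : τ * ⟪gradD d0, d1 - dh⟫
      = τ * ⟪gradD d0, d1 - d0⟫ + τ * ⟪gradD d0, d0 - dh⟫ := by rw [I1]; ring
  have I2 : ⟪d0 - dh, gradD d0 - gradD dh⟫
      = ⟪gradD d0, d0 - dh⟫ - ⟪gradD dh, d0 - dh⟫ := by
    rw [inner_sub_right, real_inner_comm (d0 - dh) (gradD d0),
      real_inner_comm (d0 - dh) (gradD dh)]
  have I2t : τ * ⟪d0 - dh, gradD d0 - gradD dh⟫
      = τ * ⟪gradD d0, d0 - dh⟫ - τ * ⟪gradD dh, d0 - dh⟫ := by rw [I2]; ring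
  have I5l : lam * ⟪K d1 - g0 + b0, K d1 - gh⟫
      = lam * ⟪K d1 - g0, K d1 - gh⟫ + lam * ⟪b0, K d1 - gh⟫ := by
    rw [inner_add_left]; ring
  linarith [F1, e1, e2, F3, F4, F5l, I4l, I5l, I1t, I2t]
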